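/- Let D = conv{0, e₁, e₂, e₁+e₂, e₃} ⊆ ℝ³ be the quadrangular pyramid over the unit square conv{0, e₁, e₂, e₁+e₂} with apex e₃. Then the Lebesgue volume of the difference body D + (−D) equals 14/3. -/

import Mathlib

open Pointwise MeasureTheory

/-- The standard basis vector `eᵢ` of `ℝ³`. -/
noncomputable def stdVec (i : Fin 3) : EuclideanSpace ℝ (Fin 3) :=
  EuclideanSpace.single i (1 : ℝ)

/-- The quadrangular pyramid `conv {0, e₁, e₂, e₁+e₂, e₃} ⊆ ℝ³` over the unit square
`conv {0, e₁, e₂, e₁+e₂}` with apex `e₃`. -/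
noncomputable def stdPyramid : Set (EuclideanSpace ℝ (Fin 3)) :=
  convexHull ℝ {0, stdVec 0, stdVec 1, stdVec 0 + stdVec 1, stdVec 2}


def inK (x y z : ℝ) : Prop :=
  |x| ≤ 1 ∧ |y| ≤ 1 ∧ |z| ≤ 1 ∧ |x + z| ≤ 1 ∧ |y + z| ≤ 1

def Lset : Set (ℝ × (Fin 2 → ℝ)) := {q | inK (q.2 0) (q.2 1) q.1}

def Kpi : Set (Fin 3 → ℝ) := {p | inK (p 0) (p 1) (p 2)}

lemma measurableSet_Lset : MeasurableSet Lset := by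
  have c0 : Continuous fun q : ℝ × (Fin 2 → ℝ) => q.2 0 := (continuous_apply 0).comp continuous_snd
  have c1 : Continuous fun q : ℝ × (Fin 2 → ℝ) => q.2 1 := (continuous_apply 1).comp continuous_snd
  have cz : Continuous fun q : ℝ × (Fin 2 → ℝ) => q.1 := continuous_fst
  have : IsClosed Lset := by
    unfold Lset inK
    simp only [Set.setOf_and]
    exact (isClosed_le c0.abs continuous_const).inter ((isClosed_le c1.abs
      continuous_const).inter ((isClosed_le cz.abs continuous_const).inter ((isClosed_le
      (c0.add cz).abs continuous_const).inter (isClosed_le (c1.add cz).abs continuous_const))))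
  exact this.measurableSet

lemma slice_volume (z : ℝ) :
    volume (Prod.mk z ⁻¹' Lset) =
      Set.indicator (Set.Icc (-1 : ℝ) 1) (fun z => ENNReal.ofReal ((2 - |z|) ^ 2)) z := by
  by_cases hz : |z| ≤ 1
  · rw [Set.indicator_of_mem (by simpa [Set.mem_Icc, ← abs_le] using hz)]
    have hpre : Prod.mk z ⁻¹' Lset =
        Set.univ.pi (fun _ : Fin 2 => Set.Icc (max (-1) (-1 - z)) (min 1 (1 - z))) := by
      ext w
      simp only [Set.mem_preimage, Lset, inK, Set.mem_setOf_eq, Set.mem_pi, Set.mem_univ,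
        forall_true_left, Set.mem_Icc, abs_le, Fin.forall_fin_two, max_le_iff, le_min_iff]
      constructor
      · rintro ⟨⟨h1, h2⟩, ⟨h3, h4⟩, _, ⟨h5, h6⟩, ⟨h7, h8⟩⟩
        refine ⟨⟨⟨h1, by linarith⟩, h2, by linarith⟩, ⟨⟨h3, by linarith⟩, h4, by linarith⟩⟩
      · rintro ⟨⟨⟨h1, h2⟩, h3, h4⟩, ⟨⟨h5, h6⟩, h7, h8⟩⟩
        rw [abs_le] at hz
        refine ⟨⟨h1, h3⟩, ⟨h5, h7⟩, ⟨hz.1, hz.2⟩, ⟨by linarith, by linarith⟩,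
          ⟨by linarith, by linarith⟩⟩
    rw [hpre, volume_pi_pi]
    have hd : min 1 (1 - z) - max (-1) (-1 - z) = 2 - |z| := by
      rcases le_total 0 z with h | h
      · rw [min_eq_right (by linarith), max_eq_left (by linarith), abs_of_nonneg h]; ring
      · rw [min_eq_left (by linarith), max_eq_right (by linarith), abs_of_nonpos h]; ring
    simp only [Real.volume_Icc, hd, Fin.prod_univ_two, sq,
      ENNReal.ofReal_mul (by rcases abs_cases z with ⟨h,_⟩|⟨h,_⟩ <;> rw [h] <;>
        rw [abs_le] at hz <;> linarith : (0:ℝ) ≤ 2 - |z|)]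
  · have hpre : Prod.mk z ⁻¹' Lset = ∅ := by
      ext w
      simp only [Set.mem_preimage, Lset, inK, Set.mem_setOf_eq, Set.mem_empty_iff_false,
        iff_false, not_and]
      intro _ _ h
      exact absurd h hz
    rw [hpre, Set.indicator_of_notMem (by simpa [Set.mem_Icc, ← abs_le] using hz)]
    simp

lemma integral_calc : ∫ x in (-1 : ℝ)..1, (2 - |x|) ^ 2 = 14 / 3 := by
  have hc : Continuous fun x : ℝ => (2 - |x|) ^ 2 := by
    exact ((continuous_const.sub continuous_abs).pow 2)
  have h1 : ∫ x in (-1 : ℝ)..0, (2 - |x|) ^ 2 = ∫ x in (-1 : ℝ)..0, (x + 2) ^ 2 := by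
    apply intervalIntegral.integral_congr
    intro x hx
    rw [Set.uIcc_of_le (by norm_num : (-1:ℝ) ≤ 0), Set.mem_Icc] at hx
    show (2 - |x|) ^ 2 = (x + 2) ^ 2
    rw [abs_of_nonpos hx.2]; ring
  have h2 : ∫ x in (0 : ℝ)..1, (2 - |x|) ^ 2 = ∫ x in (0 : ℝ)..1, (x + (-2)) ^ 2 := by
    apply intervalIntegral.integral_congr
    intro x hx
    rw [Set.uIcc_of_le (by norm_num : (0:ℝ) ≤ 1), Set.mem_Icc] at hx
    show (2 - |x|) ^ 2 = (x + (-2)) ^ 2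
    rw [abs_of_nonneg hx.1]; ring
  have h3 : ∫ x in (-1 : ℝ)..0, (x + 2) ^ 2 = 7/3 := by
    rw [intervalIntegral.integral_comp_add_right (fun x => x ^ 2) 2, integral_pow]; norm_num
  have h4 : ∫ x in (0 : ℝ)..1, (x + (-2)) ^ 2 = 7/3 := by
    rw [intervalIntegral.integral_comp_add_right (fun x => x ^ 2) (-2), integral_pow]; norm_num
  have hadd := intervalIntegral.integral_add_adjacent_intervals
    (a := (-1:ℝ)) (b := 0) (c := 1) (f := fun x => (2 - |x|) ^ 2) (μ := volume)
    (hc.intervalIntegrable _ _) (hc.intervalIntegrable _ _)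
  rw [← hadd, h1, h2, h3, h4]; norm_num

lemma volume_Kpi : volume Kpi = 14 / 3 := by
  have hKL : Kpi = (MeasurableEquiv.piFinSuccAbove (fun _ => ℝ) 2) ⁻¹' Lset :=
    Set.ext fun _ => Iff.rfl
  rw [hKL, (volume_preserving_piFinSuccAbove (fun _ => ℝ) 2).measure_preimage
    measurableSet_Lset.nullMeasurableSet]
  rw [Measure.volume_eq_prod, Measure.prod_apply measurableSet_Lset]
  simp only [slice_volume]
  rw [lintegral_indicator measurableSet_Icc]
  have hnn : (0:ℝ → ℝ) ≤ᵐ[volume.restrict (Set.Icc (-1:ℝ) 1)] fun z => (2 - |z|) ^ 2 :=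
    Filter.Eventually.of_forall fun z => by simpa using sq_nonneg (2 - |z|)
  have hint : Integrable (fun z : ℝ => (2 - |z|) ^ 2) (volume.restrict (Set.Icc (-1:ℝ) 1)) :=
    Continuous.integrableOn_Icc ((continuous_const.sub continuous_abs).pow 2)
  rw [← ofReal_integral_eq_lintegral_ofReal hint hnn]
  have heq : ∫ z in Set.Icc (-1:ℝ) 1, (2 - |z|) ^ 2 = ∫ x in (-1 : ℝ)..1, (2 - |x|) ^ 2 := by
    rw [MeasureTheory.integral_Icc_eq_integral_Ioc,
      ← intervalIntegral.integral_of_le (by norm_num : (-1:ℝ) ≤ 1)]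
  rw [heq, integral_calc]
  rw [ENNReal.ofReal_div_of_pos (by norm_num)]
  norm_num


noncomputable def mk3 (x y z : ℝ) : EuclideanSpace ℝ (Fin 3) :=
  (WithLp.equiv 2 _).symm ![x, y, z]

@[simp] lemma mk3_apply_0 (x y z : ℝ) : mk3 x y z 0 = x := rfl
@[simp] lemma mk3_apply_1 (x y z : ℝ) : mk3 x y z 1 = y := rfl
@[simp] lemma mk3_apply_2 (x y z : ℝ) : mk3 x y z 2 = z := rfl

lemma seg_interp {lo hi x : ℝ} (h : x ∈ Set.Icc lo hi) :
    ∃ t ∈ Set.Icc (0:ℝ) 1, x = (1 - t) * lo + t * hi := by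
  obtain ⟨h1, h2⟩ := h
  rcases eq_or_lt_of_le (h1.trans h2) with heq | hlt
  · exact ⟨0, ⟨le_refl 0, zero_le_one⟩, by rw [← heq] at h2 ⊢; linarith [le_antisymm h2 h1]⟩
  · refine ⟨(x - lo) / (hi - lo), ⟨?_, ?_⟩, ?_⟩
    · exact div_nonneg (by linarith) (by linarith)
    · rw [div_le_one (by linarith)]; linarith
    · have hne : hi - lo ≠ 0 := by linarith
      field_simp
      ring

lemma square_mem {lox hix loy hiy z : ℝ} (v : EuclideanSpace ℝ (Fin 3))
    (h0 : v 0 ∈ Set.Icc lox hix) (h1 : v 1 ∈ Set.Icc loy hiy) (h2 : v 2 = z) :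
    v ∈ convexHull ℝ {mk3 lox loy z, mk3 hix loy z, mk3 lox hiy z, mk3 hix hiy z} := by
  obtain ⟨s, hs, hxs⟩ := seg_interp h0
  obtain ⟨t, ht, hyt⟩ := seg_interp h1
  set T : Set (EuclideanSpace ℝ (Fin 3)) :=
    {mk3 lox loy z, mk3 hix loy z, mk3 lox hiy z, mk3 hix hiy z} with hT
  have hseg : ∀ {x0 : ℝ}, mk3 x0 loy z ∈ T → mk3 x0 hiy z ∈ T →
      mk3 x0 (v 1) z ∈ convexHull ℝ T := by
    intro x0 hA hB
    refine (convex_convexHull ℝ T).segment_subset (subset_convexHull ℝ T hA)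
      (subset_convexHull ℝ T hB) ⟨1 - t, t, by linarith [ht.2], ht.1, by ring, ?_⟩
    ext i
    fin_cases i <;> simp [PiLp.add_apply, PiLp.smul_apply, smul_eq_mul] <;> linarith [hyt]
  have hu1 : mk3 lox (v 1) z ∈ convexHull ℝ T := hseg (by simp [hT]) (by simp [hT])
  have hu2 : mk3 hix (v 1) z ∈ convexHull ℝ T := hseg (by simp [hT]) (by simp [hT])
  refine (convex_convexHull ℝ T).segment_subset hu1 hu2
    ⟨1 - s, s, by linarith [hs.2], hs.1, by ring, ?_⟩
  ext i
  fin_cases i <;> simp [PiLp.add_apply, PiLp.smul_apply, smul_eq_mul] <;> linarith [hxs, h2]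

def KE : Set (EuclideanSpace ℝ (Fin 3)) := {p | inK (p 0) (p 1) (p 2)}

def Sset : Set (EuclideanSpace ℝ (Fin 3)) :=
  {0, stdVec 0, stdVec 1, stdVec 0 + stdVec 1, stdVec 2}

lemma interp1 {x z : ℝ} (hz0 : 0 ≤ z) (hz1 : z ≤ 1) (hx : |x| ≤ 1) (hxz : |x + z| ≤ 1) :
    ∃ a ∈ Set.Icc (-1:ℝ) 0, ∃ b ∈ Set.Icc (-1:ℝ) 1, x = z * a + (1 - z) * b := by
  rw [abs_le] at hx hxz
  rcases le_total x 0 with h | h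
  · exact ⟨x, ⟨hx.1, h⟩, x, ⟨hx.1, hx.2⟩, by ring⟩
  · rcases eq_or_lt_of_le hz1 with h1 | h1
    · have hx0 : x = 0 := le_antisymm (by linarith [hxz.2]) h
      exact ⟨0, ⟨by norm_num, le_refl 0⟩, 0, ⟨by norm_num, by norm_num⟩, by rw [hx0]; ring⟩
    · have h1z : 0 < 1 - z := by linarith
      refine ⟨0, ⟨by norm_num, le_refl 0⟩, x / (1 - z), ⟨?_, ?_⟩, ?_⟩
      · have := div_nonneg h h1z.le; linarith
      · rw [div_le_one h1z]; linarith [hxz.2]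
      · field_simp; ring

lemma corner_top (x y : ℝ) (hx : x = 0 ∨ x = -1) (hy : y = 0 ∨ y = -1) :
    mk3 x y 1 ∈ Sset + -Sset := by
  have h : mk3 x y 1 = stdVec 2 + -((if x = -1 then stdVec 0 else 0) +
      (if y = -1 then stdVec 1 else 0)) := by
    ext i
    rcases hx with rfl | rfl <;> rcases hy with rfl | rfl <;> fin_cases i <;>
      norm_num [mk3, stdVec, EuclideanSpace.single_apply, PiLp.add_apply, PiLp.neg_apply, Fin.ext_iff]
  rw [h]
  apply Set.add_mem_add
  · simp [Sset]
  · rw [Set.mem_neg, neg_neg]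
    rcases hx with rfl | rfl <;> rcases hy with rfl | rfl <;> norm_num [Sset]

lemma corner_mid (x y : ℝ) (hx : x = 1 ∨ x = -1) (hy : y = 1 ∨ y = -1) :
    mk3 x y 0 ∈ Sset + -Sset := by
  have h : mk3 x y 0 = ((if x = 1 then stdVec 0 else 0) + (if y = 1 then stdVec 1 else 0)) +
      -((if x = -1 then stdVec 0 else 0) + (if y = -1 then stdVec 1 else 0)) := by
    ext i
    rcases hx with rfl | rfl <;> rcases hy with rfl | rfl <;> fin_cases i <;>
      norm_num [mk3, stdVec, EuclideanSpace.single_apply, PiLp.add_apply, PiLp.neg_apply, Fin.ext_iff]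
  rw [h]
  apply Set.add_mem_add
  · rcases hx with rfl | rfl <;> rcases hy with rfl | rfl <;> norm_num [Sset]
  · rw [Set.mem_neg, neg_neg]
    rcases hx with rfl | rfl <;> rcases hy with rfl | rfl <;> norm_num [Sset]

lemma comb_abs_le {a b x y : ℝ} (ha : 0 ≤ a) (hb : 0 ≤ b) (hab : a + b = 1)
    (hx : |x| ≤ 1) (hy : |y| ≤ 1) : |a * x + b * y| ≤ 1 := by
  calc |a * x + b * y| ≤ |a * x| + |b * y| := abs_add_le _ _
    _ = a * |x| + b * |y| := by rw [abs_mul, abs_mul, abs_of_nonneg ha, abs_of_nonneg hb]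
    _ ≤ a * 1 + b * 1 := add_le_add (mul_le_mul_of_nonneg_left hx ha)
        (mul_le_mul_of_nonneg_left hy hb)
    _ = 1 := by linarith

lemma convex_KE : Convex ℝ KE := by
  intro p hp q hq a b ha hb hab
  simp only [KE, inK, Set.mem_setOf_eq] at hp hq ⊢
  obtain ⟨p0, p1, p2, p3, p4⟩ := hp
  obtain ⟨q0, q1, q2, q3, q4⟩ := hq
  have app : ∀ i, (a • p + b • q) i = a * p i + b * q i := fun i => by
    simp [PiLp.add_apply, PiLp.smul_apply, smul_eq_mul]
  have app02 : (a • p + b • q) 0 + (a • p + b • q) 2 = a * (p 0 + p 2) + b * (q 0 + q 2) := by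
    rw [app, app]; ring
  have app12 : (a • p + b • q) 1 + (a • p + b • q) 2 = a * (p 1 + p 2) + b * (q 1 + q 2) := by
    rw [app, app]; ring
  refine ⟨?_, ?_, ?_, ?_, ?_⟩
  · rw [app]; exact comb_abs_le ha hb hab p0 q0
  · rw [app]; exact comb_abs_le ha hb hab p1 q1
  · rw [app]; exact comb_abs_le ha hb hab p2 q2
  · rw [app02]; exact comb_abs_le ha hb hab p3 q3
  · rw [app12]; exact comb_abs_le ha hb hab p4 q4

lemma Sset_bounds : ∀ a ∈ Sset,
    (0 ≤ a 0 ∧ a 0 ≤ 1) ∧ (0 ≤ a 1 ∧ a 1 ≤ 1) ∧ (0 ≤ a 2 ∧ a 2 ≤ 1) ∧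
    (0 ≤ a 0 + a 2 ∧ a 0 + a 2 ≤ 1) ∧ (0 ≤ a 1 + a 2 ∧ a 1 + a 2 ≤ 1) := by
  intro a ha
  simp only [Sset, Set.mem_insert_iff, Set.mem_singleton_iff] at ha
  rcases ha with rfl | rfl | rfl | rfl | rfl <;>
    norm_num [stdVec, EuclideanSpace.single_apply, PiLp.add_apply, Fin.ext_iff]

lemma half_mem {p : EuclideanSpace ℝ (Fin 3)} (hp : p ∈ KE) (hz : 0 ≤ p 2) :
    p ∈ convexHull ℝ (Sset + -Sset) := by
  simp only [KE, inK, Set.mem_setOf_eq] at hp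
  obtain ⟨h0, h1, h2, h3, h4⟩ := hp
  have hz1 : p 2 ≤ 1 := (abs_le.mp h2).2
  obtain ⟨a0, ha0, b0, hb0, he0⟩ := interp1 hz hz1 h0 h3
  obtain ⟨a1, ha1, b1, hb1, he1⟩ := interp1 hz hz1 h1 h4
  have hv : mk3 a0 a1 1 ∈ convexHull ℝ (Sset + -Sset) := by
    refine convexHull_mono ?_
      (square_mem (mk3 a0 a1 1) (by simpa using ha0) (by simpa using ha1) rfl)
    rintro q (rfl | rfl | rfl | rfl)
    · exact corner_top _ _ (Or.inr rfl) (Or.inr rfl)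
    · exact corner_top _ _ (Or.inl rfl) (Or.inr rfl)
    · exact corner_top _ _ (Or.inr rfl) (Or.inl rfl)
    · exact corner_top _ _ (Or.inl rfl) (Or.inl rfl)
  have hw : mk3 b0 b1 0 ∈ convexHull ℝ (Sset + -Sset) := by
    refine convexHull_mono ?_
      (square_mem (mk3 b0 b1 0) (by simpa using hb0) (by simpa using hb1) rfl)
    rintro q (rfl | rfl | rfl | rfl)
    · exact corner_mid _ _ (Or.inr rfl) (Or.inr rfl)
    · exact corner_mid _ _ (Or.inl rfl) (Or.inr rfl)
    · exact corner_mid _ _ (Or.inr rfl) (Or.inl rfl)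
    · exact corner_mid _ _ (Or.inl rfl) (Or.inl rfl)
  have hpeq : (p 2) • mk3 a0 a1 1 + (1 - p 2) • mk3 b0 b1 0 = p := by
    ext i
    fin_cases i <;> simp [PiLp.add_apply, PiLp.smul_apply, smul_eq_mul] <;>
      linarith [he0, he1]
  exact (convex_convexHull ℝ _).segment_subset hv hw
    ⟨p 2, 1 - p 2, hz, by linarith, by ring, hpeq⟩

lemma neg_mem_KE {p : EuclideanSpace ℝ (Fin 3)} (hp : p ∈ KE) : -p ∈ KE := by
  simp only [KE, inK, Set.mem_setOf_eq] at hp ⊢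
  obtain ⟨h0, h1, h2, h3, h4⟩ := hp
  simp only [PiLp.neg_apply, ← neg_add, abs_neg]
  exact ⟨h0, h1, h2, h3, h4⟩

lemma diff_eq : convexHull ℝ Sset + -convexHull ℝ Sset = KE := by
  rw [← convexHull_neg, ← convexHull_add]
  apply Set.Subset.antisymm
  · apply convexHull_min ?_ convex_KE
    intro q hq
    rw [Set.mem_add] at hq
    obtain ⟨x, hx, y, hy, rfl⟩ := hq
    rw [Set.mem_neg] at hy
    have Ha := Sset_bounds _ hx
    have Hb := Sset_bounds _ hy
    simp only [PiLp.neg_apply] at Hb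
    simp only [KE, inK, Set.mem_setOf_eq, PiLp.add_apply, abs_le]
    obtain ⟨⟨a1, a2⟩, ⟨a3, a4⟩, ⟨a5, a6⟩, ⟨a7, a8⟩, ⟨a9, a10⟩⟩ := Ha
    obtain ⟨⟨b1, b2⟩, ⟨b3, b4⟩, ⟨b5, b6⟩, ⟨b7, b8⟩, ⟨b9, b10⟩⟩ := Hb
    refine ⟨⟨?_, ?_⟩, ⟨?_, ?_⟩, ⟨?_, ?_⟩, ⟨?_, ?_⟩, ⟨?_, ?_⟩⟩ <;> linarith
  · intro p hp
    rcases le_total 0 (p 2) with h | h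
    · exact half_mem hp h
    · have h2 : -p ∈ convexHull ℝ (Sset + -Sset) :=
        half_mem (neg_mem_KE hp) (by simp only [PiLp.neg_apply]; linarith)
      have h3 : p ∈ -convexHull ℝ (Sset + -Sset) := Set.mem_neg.mpr h2
      rwa [← convexHull_neg, neg_add_rev, neg_neg] at h3


lemma measurableSet_Kpi : MeasurableSet Kpi := by
  have h : Kpi = (MeasurableEquiv.piFinSuccAbove (fun _ => ℝ) 2) ⁻¹' Lset :=
    Set.ext fun _ => Iff.rfl
  rw [h]
  exact measurableSet_Lset.preimage (MeasurableEquiv.measurable _)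

lemma volume_KE : volume KE = 14 / 3 := by
  have h : KE = (MeasurableEquiv.toLp 2 (Fin 3 → ℝ)).symm ⁻¹' Kpi := Set.ext fun _ => Iff.rfl
  rw [h, (EuclideanSpace.volume_preserving_symm_measurableEquiv_toLp (Fin 3)).measure_preimage
    measurableSet_Kpi.nullMeasurableSet]
  exact volume_Kpi

/-- The volume of the difference body of the quadrangular pyramid equals `14/3`. -/
theorem stmt_13 : volume (stdPyramid + -stdPyramid) = 14 / 3 := by
  have hS : stdPyramid = convexHull ℝ Sset := rfl
  rw [hS, diff_eq]
  exact volume_KE
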